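/- Let k ≥ 2 and p ≥ 2 be integers and let q(x) = x²·(k−x)^(p−2). Then q(0) = 0, q'(0) = 0, q(j) ≥ 0 for all integers 1 ≤ j ≤ k, and −q'(j) + r·q(j) ≥ 0 for all integers 1 ≤ j ≤ k, where r = max((2k−p)/(k−1), 0). -/

import Mathlib

open Polynomial

theorem stmt2 (k p : ℕ) (hk : 2 ≤ k) (hp : 2 ≤ p)
    (q : Polynomial ℝ) (hq : q = X ^ 2 * (C (k : ℝ) - X) ^ (p - 2))
    (r : ℝ) (hr : r = max ((2 * (k : ℝ) - p) / ((k : ℝ) - 1)) 0) :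
    q.eval 0 = 0 ∧ q.derivative.eval 0 = 0 ∧
    (∀ j : ℕ, 1 ≤ j → j ≤ k → 0 ≤ q.eval (j : ℝ)) ∧
    (∀ j : ℕ, 1 ≤ j → j ≤ k → 0 ≤ -q.derivative.eval (j : ℝ) + r * q.eval (j : ℝ)) := by
  have hk1 : (2:ℝ) ≤ (k:ℝ) := by exact_mod_cast hk
  obtain ⟨m, rfl⟩ : ∃ m, p = m + 2 := ⟨p - 2, (Nat.sub_add_cancel hp).symm⟩
  have hq2 : q = X ^ 2 * (C (k:ℝ) - X) ^ m := by simpa using hq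
  have heval : ∀ x : ℝ, q.eval x = x ^ 2 * ((k:ℝ) - x) ^ m := by
    intro x; simp [hq2]
  have hder : ∀ x : ℝ, q.derivative.eval x
      = 2 * x * ((k:ℝ) - x) ^ m - (m:ℝ) * (x ^ 2 * ((k:ℝ) - x) ^ (m - 1)) := by
    intro x
    rw [hq2]
    simp [derivative_pow]
    ring
  refine ⟨by simp [heval], by simp [hder], ?_, ?_⟩
  · intro j hj1 hjk
    have hjk' : (j:ℝ) ≤ k := by exact_mod_cast hjk
    rw [heval]
    exact mul_nonneg (sq_nonneg _) (pow_nonneg (by linarith) _)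
  · intro j hj1 hjk
    have hj1' : (1:ℝ) ≤ (j:ℝ) := by exact_mod_cast hj1
    have hjk' : (j:ℝ) ≤ k := by exact_mod_cast hjk
    have hr0 : 0 ≤ r := by rw [hr]; exact le_max_right _ _
    rw [heval, hder]
    cases m with
    | zero =>
      have hr2 : r = 2 := by
        rw [hr]
        have h1 : (2 * (k:ℝ) - ((0:ℕ)+2:ℕ)) / ((k:ℝ) - 1) = 2 := by
          have hne : (k:ℝ) - 1 ≠ 0 := by linarith
          push_cast
          field_simp
        rw [h1]
        norm_num
      rw [hr2]
      norm_num
      nlinarith [mul_nonneg (by linarith : (0:ℝ) ≤ (j:ℝ)) (by linarith : (0:ℝ) ≤ (j:ℝ) - 1)]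
    | succ n =>
      have hu : (0:ℝ) ≤ (k:ℝ) - j := by linarith
      have ht : (0:ℝ) ≤ ((k:ℝ) - j) ^ n := pow_nonneg hu n
      have hpow : ((k:ℝ) - j) ^ (n+1) = ((k:ℝ) - j) * ((k:ℝ) - j) ^ n := by
        rw [pow_succ]; ring
      simp only [Nat.add_sub_cancel, hpow]
      have key : 0 ≤ ((n:ℝ)+1) * (j:ℝ) + r * j * ((k:ℝ) - j) - 2 * ((k:ℝ) - j) := by
        by_cases hcase : 2 * (k:ℝ) ≤ ((n:ℝ) + 3)
        · nlinarith [mul_nonneg (mul_nonneg hr0 (by linarith : (0:ℝ) ≤ (j:ℝ))) hu,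
            mul_le_mul_of_nonneg_left hj1' (by positivity : (0:ℝ) ≤ (n:ℝ)+3)]
        · push_neg at hcase
          have hs : r = (2 * (k:ℝ) - ((n:ℝ)+3)) / ((k:ℝ) - 1) := by
            rw [hr]
            push_cast
            rw [max_eq_left]
            · ring_nf
            · apply div_nonneg <;> linarith
          have hkm : (0:ℝ) < (k:ℝ) - 1 := by linarith
          have hrk : r * ((k:ℝ) - 1) = 2 * (k:ℝ) - ((n:ℝ) + 3) := by
            rw [hs]; field_simp
          have hfac : 0 ≤ ((j:ℝ) - 1) *
              (2 * (k:ℝ) * ((k:ℝ) - 1) - (2 * (k:ℝ) - ((n:ℝ) + 3)) * (j:ℝ)) :=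
            mul_nonneg (by linarith) (by nlinarith)
          have hmul : 0 ≤ (((n:ℝ)+1) * (j:ℝ) + r * j * ((k:ℝ) - j) - 2 * ((k:ℝ) - j)) * ((k:ℝ) - 1) := by
            have expand : (((n:ℝ)+1) * (j:ℝ) + r * j * ((k:ℝ) - j) - 2 * ((k:ℝ) - j)) * ((k:ℝ) - 1)
                = ((n:ℝ)+1) * j * ((k:ℝ)-1) + (r * ((k:ℝ)-1)) * (j * ((k:ℝ)-j))
                  - 2 * ((k:ℝ)-j) * ((k:ℝ)-1) := by ring
            rw [expand, hrk]
            nlinarith [hfac]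
          nlinarith [hmul, hkm]
      have hbr : 0 ≤ (-(2 * j * (((k:ℝ) - j) )) + ((n:ℝ)+1) * (j:ℝ)^2 + r * (j:ℝ)^2 * ((k:ℝ)-j)) := by
        nlinarith [mul_nonneg (by linarith : (0:ℝ) ≤ (j:ℝ)) key]
      push_cast
      nlinarith [mul_nonneg ht hbr]
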